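/- Let S = ⟨A ∣ 1 → bⁿ⟩ be a one-rule SRS whose left-hand side is the empty word and whose right-hand side is bⁿ for some letter b ∈ A and some n ≥ 1. Then M_3 is not embeddable in the reduction graph G_S. -/
import Mathlib


/-- One-step reduction of the one-rule SRS `⟨A ∣ u → v⟩`: `w →_S w'`. -/
def Step {A : Type*} (u v w w' : List A) : Prop :=
  ∃ p q : List A, w = p ++ u ++ q ∧ w' = p ++ v ++ q

/-- One-step reduction of `⟨A ∣ u → v⟩` carried out at position `i`. -/
def StepAt {A : Type*} (u v : List A) (i : ℕ) (w w' : List A) : Prop :=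
  ∃ p q : List A, p.length = i ∧ w = p ++ u ++ q ∧ w' = p ++ v ++ q

/-- The diamond graph `M_k` is embeddable in the reduction graph `G_S` of
`S = ⟨A ∣ u → v⟩`: there are pairwise distinct words `x, y, z_1, …, z_k`
with `x →_S z_i` and `z_i →_S y` for every `i`. -/
def MkEmbeddable {A : Type*} (u v : List A) (k : ℕ) : Prop :=
  ∃ (x y : List A) (z : Fin k → List A),
    Function.Injective z ∧ (∀ i, x ≠ z i) ∧ (∀ i, y ≠ z i) ∧ x ≠ y ∧
    ∀ i, Step u v x (z i) ∧ Step u v (z i) y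

/-- Projection from the decorated alphabet `A ⊕ A` (`inl a` = plain letter `a`,
`inr a` = decorated letter `a•`) back to `A`. -/
def proj {A : Type*} : A ⊕ A → A := Sum.elim id id

/-- One-step reduction of the decorated SRS `S̄` carried out at position `i`:
some word `ū` projecting to `u` is replaced by the fully decorated `v•`. -/
def DecStepAt {A : Type*} (u v : List A) (i : ℕ) (w w' : List (A ⊕ A)) : Prop :=
  ∃ p q ubar : List (A ⊕ A),
    p.length = i ∧ ubar.map proj = u ∧
    w = p ++ ubar ++ q ∧ w' = p ++ v.map Sum.inr ++ q

/-- The leftmost decorated letter of `w` is at position `i`. -/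
def FirstDecorated {A : Type*} (w : List (A ⊕ A)) (i : ℕ) : Prop :=
  (∃ a : A, w[i]? = some (Sum.inr a)) ∧
  ∀ j < i, ∀ a : A, w[j]? ≠ some (Sum.inr a)

/-- The one-rule SRS `⟨A ∣ u → v⟩` is left cancellative:
`u, v` are nonempty and their first letters are distinct. -/
def LeftCancellative {A : Type*} (u v : List A) : Prop :=
  u ≠ [] ∧ v ≠ [] ∧ u.head? ≠ v.head?

/-- `w` is bordered with `T`: `T` is both a prefix and a suffix of `w`. -/
def Bordered {A : Type*} (T w : List A) : Prop :=
  T <+: w ∧ T <:+ w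

/-- `T` is self-overlap-free: `OVL(T) = ∅`, i.e. there is no nonempty `w`
with `T = x ++ w = w ++ y` for nonempty `x, y`. -/
def SelfOverlapFree {A : Type*} (T : List A) : Prop :=
  ∀ w x y : List A, w ≠ [] → x ≠ [] → y ≠ [] → T = x ++ w → T = w ++ y → False

/-- `glue T [R₁, …, R_k] = T R₁ T R₂ ⋯ T R_k T`, the word of `Bord_T` whose
canonical decomposition is `R₁, …, R_k`; thus `φ_T (glue T Rs) = Rs`
(a word of length `Rs.length` over the alphabet `B` of `T`-free words). -/
def glue {A : Type*} (T : List A) : List (List A) → List A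
  | [] => T
  | R :: Rs => T ++ R ++ glue T Rs

set_option linter.unusedSectionVars false

namespace M3Aux
variable {A : Type*} [DecidableEq A]

def enc (b : A) : List A → ℕ × List (A × ℕ)
  | [] => (0, [])
  | a :: w =>
      if a = b then ((enc b w).1 + 1, (enc b w).2)
      else (0, (a, (enc b w).1) :: (enc b w).2)

lemma enc_cons_self (b : A) (w : List A) :
    enc b (b :: w) = ((enc b w).1 + 1, (enc b w).2) := by simp [enc]

lemma enc_cons_ne {a b : A} (h : a ≠ b) (w : List A) :
    enc b (a :: w) = (0, (a, (enc b w).1) :: (enc b w).2) := by simp [enc, h]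

def dec (b : A) : List (A × ℕ) → ℕ → List A
  | [], r => List.replicate r b
  | cr :: l, r => List.replicate r b ++ cr.1 :: dec b l cr.2

lemma dec_succ (b : A) (l : List (A × ℕ)) (r : ℕ) :
    dec b l (r + 1) = b :: dec b l r := by
  cases l <;> simp [dec, List.replicate_succ]

lemma dec_enc (b : A) : ∀ w, dec b (enc b w).2 (enc b w).1 = w := by
  intro w
  induction w with
  | nil => simp [enc, dec]
  | cons a w ih =>
      by_cases h : a = b
      · subst h
        rw [enc_cons_self, dec_succ, ih]
      · rw [enc_cons_ne h]
        simp only [dec, List.replicate_zero, List.nil_append, ih]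

/-- number of non-`b` letters -/
def nb (b : A) : List A → ℕ
  | [] => 0
  | a :: w => nb b w + (if a = b then 0 else 1)

lemma nb_append (b : A) (p q : List A) : nb b (p ++ q) = nb b p + nb b q := by
  induction p with
  | nil => simp [nb]
  | cons a p ih => simp [nb, ih]; omega

lemma nb_replicate (b : A) (n : ℕ) : nb b (List.replicate n b) = 0 := by
  induction n with
  | zero => simp [nb]
  | succ m ih => simp [List.replicate_succ, nb, ih]

lemma enc_len (b : A) : ∀ w, (enc b w).2.length = nb b w := by
  intro w
  induction w with
  | nil => simp [enc, nb]
  | cons a w ih =>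
      by_cases h : a = b <;> simp [enc, nb, h, ih]

def addL : ℕ → ℕ → List (A × ℕ) → List (A × ℕ)
  | _, _, [] => []
  | 0, n, cr :: l => (cr.1, cr.2 + n) :: l
  | j+1, n, cr :: l => cr :: addL j n l

def addE (j n : ℕ) (e : ℕ × List (A × ℕ)) : ℕ × List (A × ℕ) :=
  match j with
  | 0 => (e.1 + n, e.2)
  | j+1 => (e.1, addL j n e.2)

lemma addL_length (j n : ℕ) : ∀ l : List (A × ℕ), (addL j n l).length = l.length := by
  induction j with
  | zero => intro l; cases l <;> simp [addL]
  | succ j ih => intro l; cases l <;> simp [addL, ih]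

lemma addE_length (j n : ℕ) (e : ℕ × List (A × ℕ)) :
    (addE j n e).2.length = e.2.length := by
  cases j <;> simp [addE, addL_length]

lemma addE_fst_succ (j n : ℕ) (e : ℕ × List (A × ℕ)) :
    addE j n (e.1 + 1, e.2) = ((addE j n e).1 + 1, (addE j n e).2) := by
  cases j with
  | zero => simp [addE]; omega
  | succ j => simp [addE]

lemma enc_rep (b : A) (n : ℕ) (q : List A) :
    enc b (List.replicate n b ++ q) = ((enc b q).1 + n, (enc b q).2) := by
  induction n with
  | zero => simp
  | succ m ih =>
      rw [List.replicate_succ, List.cons_append, enc_cons_self, ih]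
      simp; omega

lemma enc_insert (b : A) (n : ℕ) :
    ∀ p q, enc b (p ++ List.replicate n b ++ q) = addE (nb b p) n (enc b (p ++ q)) := by
  intro p
  induction p with
  | nil => intro q; simp [nb, enc_rep, addE]
  | cons a p ih =>
      intro q
      simp only [List.cons_append]
      by_cases h : a = b
      · rw [h, enc_cons_self, enc_cons_self, ih q]
        have : nb b (b :: p) = nb b p := by simp [nb]
        rw [this, addE_fst_succ]
      · rw [enc_cons_ne h, enc_cons_ne h, ih q]
        have : nb b (a :: p) = nb b p + 1 := by simp [nb, h]
        rw [this]
        set E := enc b (p ++ q) with hE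
        cases hj : nb b p with
        | zero => simp [hj, addE, addL]
        | succ j => simp [hj, addE, addL]

lemma addL_get (j n : ℕ) : ∀ (l : List (A × ℕ)) (i : ℕ),
    (addL j n l)[i]? = (l[i]?).map (fun cr => (cr.1, cr.2 + if i = j then n else 0)) := by
  induction j with
  | zero =>
      intro l i
      cases l with
      | nil => simp [addL]
      | cons cr l =>
          cases i with
          | zero => simp [addL]
          | succ i =>
              simp only [addL, List.getElem?_cons_succ]
              cases h : l[i]? <;> simp
  | succ j ih =>
      intro l i
      cases l with
      | nil => simp [addL]
      | cons cr l =>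
          cases i with
          | zero => simp [addL]
          | succ i => simp [addL, ih l i]

def val (e : ℕ × List (A × ℕ)) : ℕ → ℕ
  | 0 => e.1
  | i+1 => ((e.2[i]?).map Prod.snd).getD 0

lemma val_addE (j n : ℕ) (e : ℕ × List (A × ℕ)) (h : j ≤ e.2.length) (i : ℕ) :
    val (addE j n e) i = val e i + if i = j then n else 0 := by
  cases j with
  | zero =>
      cases i with
      | zero => simp [addE, val]
      | succ i => simp [addE, val]
  | succ j =>
      cases i with
      | zero => simp [addE, val]
      | succ i =>
          simp only [addE, val, addL_get]
          by_cases hij : i = j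
          · subst hij
            have hi : i < e.2.length := by omega
            rw [List.getElem?_eq_getElem hi]
            simp
          · cases h' : e.2[i]? <;> simp [hij]

end M3Aux

namespace M3Aux
theorem main {A : Type*} (b : A) (n : ℕ) (hn : 1 ≤ n) :
    ¬ (∃ (x y : List A) (z : Fin 3 → List A),
    Function.Injective z ∧ (∀ i, x ≠ z i) ∧ (∀ i, y ≠ z i) ∧ x ≠ y ∧
    ∀ i, (∃ p q : List A, x = p ++ [] ++ q ∧ z i = p ++ List.replicate n b ++ q) ∧
      (∃ p q : List A, z i = p ++ [] ++ q ∧ y = p ++ List.replicate n b ++ q)) := by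
  classical
  rintro ⟨x, y, z, hinj, -, -, -, hstep⟩
  set E := enc b x with hE
  have key : ∀ i : Fin 3, ∃ j k : ℕ, j ≤ E.2.length ∧ k ≤ E.2.length ∧
      enc b (z i) = addE j n E ∧
      enc b y = addE k n (enc b (z i)) := by
    intro i
    obtain ⟨⟨p, q, hx, hz⟩, ⟨p', q', hz', hy⟩⟩ := hstep i
    have hx' : x = p ++ q := by simpa using hx
    have hz'' : z i = p' ++ q' := by simpa using hz'
    have hL : E.2.length = nb b x := enc_len b x
    have hnbz : nb b (z i) = nb b x := by
      rw [hz, hx', nb_append, nb_append, nb_append, nb_replicate]; omega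
    refine ⟨nb b p, nb b p', ?_, ?_, ?_, ?_⟩
    · rw [hL, hx', nb_append]; omega
    · rw [hL, ← hnbz, hz'', nb_append]; omega
    · rw [hz, enc_insert, ← hx', hE]
    · rw [hy, enc_insert, ← hz'']
  obtain ⟨j0, k0, hj0, hk0, hz0, hy0⟩ := key 0
  obtain ⟨j1, k1, hj1, hk1, hz1, hy1⟩ := key 1
  obtain ⟨j2, k2, hj2, hk2, hz2, hy2⟩ := key 2
  -- distinctness of the j's
  have hdist : ∀ i i' : Fin 3, z i ≠ z i' →
      ∀ j j' : ℕ, enc b (z i) = addE j n E → enc b (z i') = addE j' n E → j ≠ j' := by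
    intro i i' hne j j' h h' hjj
    subst hjj
    apply hne
    have : enc b (z i) = enc b (z i') := h.trans h'.symm
    calc z i = dec b (enc b (z i)).2 (enc b (z i)).1 := (dec_enc b _).symm
      _ = dec b (enc b (z i')).2 (enc b (z i')).1 := by rw [this]
      _ = z i' := dec_enc b _
  have hne01 : z 0 ≠ z 1 := fun h => absurd (hinj h) (by decide)
  have hne02 : z 0 ≠ z 2 := fun h => absurd (hinj h) (by decide)
  have hne12 : z 1 ≠ z 2 := fun h => absurd (hinj h) (by decide)
  have hj01 : j0 ≠ j1 := hdist 0 1 hne01 _ _ hz0 hz1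
  have hj02 : j0 ≠ j2 := hdist 0 2 hne02 _ _ hz0 hz2
  have hj12 : j1 ≠ j2 := hdist 1 2 hne12 _ _ hz1 hz2
  -- pointwise value identity
  have hvv : ∀ (j k : ℕ), j ≤ E.2.length → k ≤ E.2.length →
      ∀ t, val (addE k n (addE j n E)) t
        = val E t + (if t = j then n else 0) + (if t = k then n else 0) := by
    intro j k hj hk t
    rw [val_addE k n _ (by rw [addE_length]; exact hk), val_addE j n _ hj]
  have H02 : ∀ t, val E t + (if t = j0 then n else 0) + (if t = k0 then n else 0)
      = val E t + (if t = j2 then n else 0) + (if t = k2 then n else 0) := by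
    intro t
    rw [← hvv j0 k0 hj0 hk0 t, ← hvv j2 k2 hj2 hk2 t, ← hz0, ← hz2, ← hy0, ← hy2]
  have H12 : ∀ t, val E t + (if t = j1 then n else 0) + (if t = k1 then n else 0)
      = val E t + (if t = j2 then n else 0) + (if t = k2 then n else 0) := by
    intro t
    rw [← hvv j1 k1 hj1 hk1 t, ← hvv j2 k2 hj2 hk2 t, ← hz1, ← hz2, ← hy1, ← hy2]
  have c0 : j0 = k2 := by
    by_contra hc
    have h := H02 j0
    simp only [if_pos rfl, if_neg hj02, if_neg hc] at h
    by_cases h0 : j0 = k0 <;> simp [h0] at h <;> omega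
  have c1 : j1 = k2 := by
    by_contra hc
    have h := H12 j1
    simp only [if_pos rfl, if_neg hj12, if_neg hc] at h
    by_cases h0 : j1 = k1 <;> simp [h0] at h <;> omega
  exact hj01 (c0.trans c1.symm)

end M3Aux

/-- for the SRS `⟨A ∣ 1 → bⁿ⟩` with `n ≥ 1`, `M_3` is not
embeddable in `G_S`. -/
theorem M3_not_embeddable_one_to_power {A : Type*} (b : A) (n : ℕ) (hn : 1 ≤ n) :
    ¬ MkEmbeddable ([] : List A) (List.replicate n b) 3 := by
  exact M3Aux.main b n hn
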